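/- Let Z₁ and Z₂ be independent standard normal random variables, let m ∈ ℝ, ζ₁ > 0, ζ₂ > 0, ρ ∈ [−1, 1], and set X₁ = m + ζ₁ Z₁ and X₂ = m + ζ₂ (ρ Z₁ + √(1 − ρ²) Z₂), so that c := Cov(X₁, X₂) = ρ ζ₁ ζ₂. Then for any thresholds θ₁ > 0 and θ₂ > 0, E[(η(X₁; θ₁) − m)(η(X₂; θ₂) − m)] = −c + E[(η(X₁; θ₁) − X₁)(η(X₂; θ₂) − X₂)] + c · ( P(|X₁| ≥ θ₁) + P(|X₂| ≥ θ₂) ). -/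

import Mathlib

open MeasureTheory ProbabilityTheory

/-- The soft-thresholding function `η(x; θ) = sign(x)·max(|x| − θ, 0)`. -/
noncomputable def softThresh (x θ : ℝ) : ℝ := Real.sign x * max (|x| - θ) 0

open Real Set Filter
open scoped ENNReal NNReal

namespace SteinAux

noncomputable def φ (z : ℝ) : ℝ := gaussianPDFReal 0 1 z
noncomputable def g (θ x : ℝ) : ℝ := softThresh x θ - x

lemma softThresh_eq {θ : ℝ} (hθ : 0 ≤ θ) (x : ℝ) :
    softThresh x θ = max (x - θ) 0 + min (x + θ) 0 := by
  rcases lt_trichotomy x 0 with hx | hx | hx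
  · rw [softThresh, Real.sign_of_neg hx, abs_of_neg hx]
    rcases le_or_gt (x + θ) 0 with h | h
    · rw [max_eq_left (by linarith), max_eq_right (by linarith), min_eq_left h, zero_add]; ring
    · rw [max_eq_right (by linarith), max_eq_right (by linarith), min_eq_right h.le]; ring
  · subst hx; simp [softThresh, Real.sign_zero, max_eq_right (by linarith : -θ ≤ (0:ℝ)),
      min_eq_right hθ]
  · rw [softThresh, Real.sign_of_pos hx, abs_of_pos hx, min_eq_right (by linarith), one_mul,
      add_zero]

lemma continuous_softThresh {θ : ℝ} (hθ : 0 ≤ θ) : Continuous (fun x => softThresh x θ) := by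
  simp only [softThresh_eq hθ]
  exact ((continuous_id.sub continuous_const).max continuous_const).add
    ((continuous_id.add continuous_const).min continuous_const)

lemma g_of_le {θ x : ℝ} (hθ : 0 ≤ θ) (h : x ≤ -θ) : g θ x = θ := by
  rw [g, softThresh_eq hθ, max_eq_right (by linarith), min_eq_left (by linarith)]; ring

lemma g_of_abs_le {θ x : ℝ} (h : |x| ≤ θ) : g θ x = -x := by
  have hθ : 0 ≤ θ := le_trans (abs_nonneg x) h
  rw [abs_le] at h
  rw [g, softThresh_eq hθ,
    max_eq_right (by linarith), min_eq_right (by linarith)]; ring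

lemma g_of_ge {θ x : ℝ} (hθ : 0 ≤ θ) (h : θ ≤ x) : g θ x = -θ := by
  rw [g, softThresh_eq hθ, max_eq_left (by linarith), min_eq_right (by linarith)]; ring

lemma abs_g_le {θ : ℝ} (hθ : 0 ≤ θ) (x : ℝ) : |g θ x| ≤ θ := by
  rcases le_total x (-θ) with h | h
  · rw [g_of_le hθ h, abs_of_nonneg hθ]
  rcases le_total θ x with h2 | h2
  · rw [g_of_ge hθ h2, abs_neg, abs_of_nonneg hθ]
  · rw [g_of_abs_le (abs_le.mpr ⟨h, h2⟩), abs_neg, abs_le]; constructor <;> linarith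

lemma continuous_g {θ : ℝ} (hθ : 0 ≤ θ) : Continuous (g θ) :=
  (continuous_softThresh hθ).sub continuous_id

lemma φ_eq (z : ℝ) : φ z = (Real.sqrt (2 * π))⁻¹ * Real.exp (-z ^ 2 / 2) := by
  simp [φ, gaussianPDFReal]

lemma φ_nonneg (z : ℝ) : 0 ≤ φ z := gaussianPDFReal_nonneg 0 1 z

lemma continuous_φ : Continuous φ := by
  have : φ = fun z => (Real.sqrt (2 * π))⁻¹ * Real.exp (-z ^ 2 / 2) := funext φ_eq
  rw [this]
  exact continuous_const.mul (Real.continuous_exp.comp (((continuous_pow 2).neg).div_const 2))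

lemma hasDerivAt_negφ (z : ℝ) : HasDerivAt (fun z => -φ z) (z * φ z) z := by
  simp only [φ_eq]
  have h : HasDerivAt (fun z : ℝ => -z ^ 2 / 2) (-z) z := by
    have h0 := ((hasDerivAt_pow 2 z).fun_neg.div_const 2)
    refine h0.congr_deriv ?_
    simp; ring
  have := (h.exp.const_mul (Real.sqrt (2 * π))⁻¹).fun_neg
  exact this.congr_deriv (by ring)

lemma hasDerivAt_h (z : ℝ) : HasDerivAt (fun z => -z * φ z) (z ^ 2 * φ z - φ z) z := by
  have h1 : HasDerivAt (fun z : ℝ => -z) (-1) z := (hasDerivAt_id z).neg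
  have h2 : HasDerivAt φ (-(z * φ z)) z := by
    simpa using (hasDerivAt_negφ z).fun_neg
  exact (h1.fun_mul h2).congr_deriv (by ring)

lemma integrable_φ : Integrable φ := integrable_gaussianPDFReal 0 1

lemma integral_φ : ∫ z, φ z = 1 := integral_gaussianPDFReal_eq_one 0 one_ne_zero

lemma integrable_zφ : Integrable (fun z => z * φ z) := by
  have h := (integrable_mul_exp_neg_mul_sq (by norm_num : (0:ℝ) < 1/2)).const_mul
    (Real.sqrt (2 * π))⁻¹
  refine h.congr (ae_of_all _ fun z => ?_)
  simp only [φ_eq]; ring_nf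

lemma integrable_z2φ : Integrable (fun z => z ^ 2 * φ z) := by
  have h := (integrable_rpow_mul_exp_neg_mul_sq (by norm_num : (0:ℝ) < 1/2)
    (by norm_num : (-1:ℝ) < 2)).const_mul (Real.sqrt (2 * π))⁻¹
  refine h.congr (ae_of_all _ fun z => ?_)
  simp only [φ_eq, ← Real.rpow_natCast z 2]
  push_cast
  ring_nf

lemma tendsto_φ_atTop : Tendsto φ atTop (nhds 0) := by
  have h1 : Tendsto (fun z : ℝ => z ^ 2) atTop atTop := tendsto_pow_atTop two_ne_zero
  have h2 : Tendsto (fun z : ℝ => -z ^ 2) atTop atBot := by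
    have := tendsto_neg_atTop_atBot.comp h1
    exact this
  have h3 : Tendsto (fun z : ℝ => -z ^ 2 / 2) atTop atBot := h2.atBot_div_const (by norm_num)
  have h4 := (Real.tendsto_exp_atBot.comp h3).const_mul (Real.sqrt (2 * π))⁻¹
  rw [mul_zero] at h4
  exact h4.congr fun z => (φ_eq z).symm

lemma φ_even (z : ℝ) : φ (-z) = φ z := by simp [φ_eq]

lemma tendsto_φ_atBot : Tendsto φ atBot (nhds 0) := by
  have := tendsto_φ_atTop.comp tendsto_neg_atBot_atTop
  exact this.congr fun z => φ_even z

lemma tendsto_zφ_atTop : Tendsto (fun z => z * φ z) atTop (nhds 0) := by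
  have h : (fun z : ℝ => z ^ (1:ℝ) * Real.exp (-(1/2) * z ^ 2)) =o[atTop]
      fun z : ℝ => Real.exp (-(1/2) * z) :=
    rpow_mul_exp_neg_mul_sq_isLittleO_exp_neg (by norm_num) 1
  have h2 : Tendsto (fun z : ℝ => Real.exp (-(1/2) * z)) atTop (nhds 0) := by
    have hl : Tendsto (fun z : ℝ => -(1/2) * z) atTop atBot :=
      tendsto_id.const_mul_atTop_of_neg (by norm_num)
    exact Real.tendsto_exp_atBot.comp hl
  have h3 : Tendsto (fun z : ℝ => z ^ (1:ℝ) * Real.exp (-(1/2) * z ^ 2)) atTop (nhds 0) :=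
    h.isBigO.trans_tendsto h2
  have h4 := h3.const_mul (Real.sqrt (2 * π))⁻¹
  rw [mul_zero] at h4
  apply h4.congr'
  filter_upwards [eventually_gt_atTop (0:ℝ)] with z hz
  rw [Real.rpow_one, φ_eq]; ring_nf

lemma tendsto_zφ_atBot : Tendsto (fun z => z * φ z) atBot (nhds 0) := by
  have := (tendsto_zφ_atTop.comp tendsto_neg_atBot_atTop).neg
  simp only [Function.comp, φ_even, neg_mul, neg_neg, neg_zero] at this
  exact this

lemma integral_zφ : ∫ z, z * φ z = 0 := by
  have h := MeasureTheory.integral_of_hasDerivAt_of_tendsto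
    (f := fun z => -φ z) (f' := fun z => z * φ z)
    (fun x => hasDerivAt_negφ x) integrable_zφ (tendsto_φ_atBot.neg) (tendsto_φ_atTop.neg)
  simpa using h

lemma integral_z2φ : ∫ z, z ^ 2 * φ z = 1 := by
  have key : ∫ z, (z ^ 2 * φ z - φ z) = 0 := by
    have h := MeasureTheory.integral_of_hasDerivAt_of_tendsto
      (f := fun z => -z * φ z) (f' := fun z => z ^ 2 * φ z - φ z)
      (fun x => hasDerivAt_h x) (integrable_z2φ.sub integrable_φ)
      (by simpa using tendsto_zφ_atBot.neg) (by simpa using tendsto_zφ_atTop.neg)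
    simpa using h
  have := integral_sub integrable_z2φ integrable_φ
  rw [key] at this
  rw [integral_φ] at this
  linarith [this]

noncomputable abbrev gμ : Measure ℝ := gaussianReal 0 1

lemma gμ_eq : gμ = (volume : Measure ℝ).withDensity (fun z => ((φ z).toNNReal : ℝ≥0∞)) := by
  rw [gμ, gaussianReal_of_var_ne_zero 0 one_ne_zero]; rfl

lemma integral_gauss (f : ℝ → ℝ) : ∫ z, f z ∂gμ = ∫ z, f z * φ z := by
  rw [gμ_eq, integral_withDensity_eq_integral_smul
    (continuous_φ.measurable.real_toNNReal) f]
  congr 1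
  funext z
  rw [NNReal.smul_def, smul_eq_mul, Real.coe_toNNReal _ (φ_nonneg z), mul_comm]

lemma gauss_set {s : Set ℝ} (hs : MeasurableSet s) :
    (gμ s).toReal = ∫ z in s, φ z := by
  rw [gμ, gaussianReal_apply_eq_integral 0 one_ne_zero s]
  have hφ : ∫ x in s, gaussianPDFReal 0 1 x = ∫ z in s, φ z := rfl
  rw [hφ, ENNReal.toReal_ofReal (setIntegral_nonneg hs fun z _ => φ_nonneg z)]

lemma gauss_singleton (b : ℝ) : gμ {b} = 0 :=
  gaussianReal_absolutelyContinuous 0 one_ne_zero (Real.volume_singleton)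

lemma integrable_of_bounded {α : Type*} [MeasurableSpace α] (P : Measure α) [IsFiniteMeasure P]
    {f : α → ℝ} (hf : AEStronglyMeasurable f P) (C : ℝ) (h : ∀ x, |f x| ≤ C) :
    Integrable f P :=
  Integrable.mono' (integrable_const C) hf (ae_of_all _ h)

lemma integral_id_gauss : ∫ z, z ∂gμ = 0 := by
  rw [integral_gauss]; exact integral_zφ

lemma integral_sq_gauss : ∫ z, z ^ 2 ∂gμ = 1 := by
  rw [integral_gauss]; exact integral_z2φ

lemma integrable_gauss_of_lebesgue {f : ℝ → ℝ} (hf : Measurable f)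
    (h : Integrable (fun z => f z * φ z)) : Integrable f gμ := by
  rw [gμ_eq, integrable_withDensity_iff
    ((continuous_φ.measurable.real_toNNReal).coe_nnreal_ennreal)
    (ae_of_all _ fun z => ENNReal.coe_lt_top)]
  refine h.congr (ae_of_all _ fun z => ?_)
  simp only [ENNReal.coe_toReal, Real.coe_toNNReal _ (φ_nonneg z)]

lemma integrable_id_gauss : Integrable (fun z : ℝ => z) gμ :=
  integrable_gauss_of_lebesgue measurable_id integrable_zφ

lemma integrable_sq_gauss : Integrable (fun z : ℝ => z ^ 2) gμ :=
  integrable_gauss_of_lebesgue (measurable_id.pow_const 2) integrable_z2φ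

lemma measurable_g {θ : ℝ} (hθ : 0 ≤ θ) : Measurable (g θ) := (continuous_g hθ).measurable

lemma integrable_zg_φ {α β θ : ℝ} (hθ : 0 < θ) :
    Integrable (fun z => z * g θ (α + β * z) * φ z) := by
  refine Integrable.mono' ((integrable_zφ.abs).const_mul θ) ?_ (ae_of_all _ fun z => ?_)
  · exact (measurable_id.mul ((measurable_g hθ.le).comp (by fun_prop))).mul
      continuous_φ.measurable |>.aestronglyMeasurable
  · simp only [Real.norm_eq_abs, abs_mul]
    have h1 : |g θ (α + β * z)| ≤ θ := abs_g_le hθ.le _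
    calc |z| * |g θ (α + β * z)| * |φ z| ≤ |z| * θ * |φ z| :=
          mul_le_mul_of_nonneg_right (mul_le_mul_of_nonneg_left h1 (abs_nonneg z))
            (abs_nonneg (φ z))
      _ = θ * (|z| * |φ z|) := by ring

lemma integrable_zg_gauss {α β θ : ℝ} (hθ : 0 < θ) :
    Integrable (fun z => z * g θ (α + β * z)) gμ := by
  apply integrable_gauss_of_lebesgue
    (measurable_id.mul ((measurable_g hθ.le).comp (by fun_prop)))
  exact integrable_zg_φ hθ

lemma stein_pos {α β θ : ℝ} (hβ : 0 < β) (hθ : 0 < θ) :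
    ∫ z, z * g θ (α + β * z) ∂gμ = -β * (gμ {z | |α + β * z| < θ}).toReal := by
  set a := (-θ - α) / β with ha
  set b := (θ - α) / β with hb
  have hβa : β * a = -θ - α := by rw [ha]; field_simp
  have hβb : β * b = θ - α := by rw [hb]; field_simp
  have hab : a ≤ b := by nlinarith [hβa, hβb]
  -- set identification
  have hset : {z : ℝ | |α + β * z| < θ} = Ioo a b := by
    ext z
    simp only [mem_setOf_eq, mem_Ioo, abs_lt]
    constructor
    · rintro ⟨h1, h2⟩
      constructor
      · rw [ha, div_lt_iff₀ hβ]; linarith [mul_comm a β]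
      · rw [hb, lt_div_iff₀ hβ]; linarith
    · rintro ⟨h1, h2⟩
      have h1' : β * a < β * z := by exact mul_lt_mul_of_pos_left h1 hβ
      have h2' : β * z < β * b := by exact mul_lt_mul_of_pos_left h2 hβ
      rw [hβa] at h1'; rw [hβb] at h2'
      constructor <;> linarith
  -- measure of Ioo = Ioc
  have hIoo : gμ (Ioo a b) = gμ (Ioc a b) := by
    apply le_antisymm (measure_mono Ioo_subset_Ioc_self)
    calc gμ (Ioc a b) ≤ gμ (Ioo a b ∪ {b}) := by
          apply measure_mono
          intro z hz
          rcases eq_or_lt_of_le hz.2 with h | h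
          · exact Or.inr (by simp [h])
          · exact Or.inl ⟨hz.1, h⟩
      _ ≤ gμ (Ioo a b) + gμ {b} := measure_union_le _ _
      _ = gμ (Ioo a b) := by rw [gauss_singleton, add_zero]
  rw [hset, hIoo, gauss_set measurableSet_Ioc, integral_gauss]
  set M := ∫ z in Ioc a b, φ z with hM
  -- split the real line
  have hint : Integrable (fun z => z * g θ (α + β * z) * φ z) := integrable_zg_φ hθ
  have hsplit1 : (∫ z in Iic a, z * g θ (α + β * z) * φ z)
      + (∫ z in Ioi a, z * g θ (α + β * z) * φ z) = ∫ z, z * g θ (α + β * z) * φ z :=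
    intervalIntegral.integral_Iic_add_Ioi hint.integrableOn hint.integrableOn
  have hsplit2 : (∫ z in Ioc a b, z * g θ (α + β * z) * φ z)
      + (∫ z in Ioi b, z * g θ (α + β * z) * φ z) = ∫ z in Ioi a, z * g θ (α + β * z) * φ z := by
    rw [← Ioc_union_Ioi_eq_Ioi hab]
    rw [setIntegral_union (Set.Ioc_disjoint_Ioi le_rfl) measurableSet_Ioi
      hint.integrableOn hint.integrableOn]
  -- piece 1
  have hp1 : (∫ z in Iic a, z * g θ (α + β * z) * φ z) = θ * (-φ a) := by
    rw [setIntegral_congr_fun measurableSet_Iic (g := fun z => θ * (z * φ z))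
      (fun z hz => by
        rw [g_of_le hθ.le]
        · ring
        · have : β * z ≤ β * a := mul_le_mul_of_nonneg_left hz hβ.le
          rw [hβa] at this; linarith)]
    rw [integral_const_mul]
    congr 1
    have := integral_Iic_of_hasDerivAt_of_tendsto (a := a)
      (f := fun z => -φ z) (f' := fun z => z * φ z)
      ((continuous_φ.neg).continuousWithinAt)
      (fun x _ => hasDerivAt_negφ x) (integrable_zφ.integrableOn)
      (tendsto_φ_atBot.neg.congr fun z => rfl)
    rw [this]; simp
  -- piece 3
  have hp3 : (∫ z in Ioi b, z * g θ (α + β * z) * φ z) = -θ * φ b := by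
    rw [setIntegral_congr_fun measurableSet_Ioi (g := fun z => -θ * (z * φ z))
      (fun z hz => by
        rw [g_of_ge hθ.le]
        · ring
        · have : β * b ≤ β * z := mul_le_mul_of_nonneg_left (le_of_lt hz) hβ.le
          rw [hβb] at this; linarith)]
    rw [integral_const_mul]
    have := integral_Ioi_of_hasDerivAt_of_tendsto (a := b)
      (f := fun z => -φ z) (f' := fun z => z * φ z)
      ((continuous_φ.neg).continuousWithinAt)
      (fun x _ => hasDerivAt_negφ x) (integrable_zφ.integrableOn)
      (tendsto_φ_atTop.neg.congr fun z => rfl)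
    rw [this]; ring_nf
  -- middle pieces
  have hmid1 : (∫ z in Ioc a b, z * φ z) = φ a - φ b := by
    rw [← intervalIntegral.integral_of_le hab]
    rw [intervalIntegral.integral_eq_sub_of_hasDerivAt (f := fun z => -φ z)
      (fun x _ => hasDerivAt_negφ x)
      ((continuous_id.mul continuous_φ).intervalIntegrable a b)]
    ring
  have hmid2 : (∫ z in Ioc a b, z ^ 2 * φ z) = M + (a * φ a - b * φ b) := by
    have hkey : (∫ z in Ioc a b, (z ^ 2 * φ z - φ z)) = -b * φ b - (-a * φ a) := by
      rw [← intervalIntegral.integral_of_le hab]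
      exact intervalIntegral.integral_eq_sub_of_hasDerivAt (f := fun z => -z * φ z)
        (fun x _ => hasDerivAt_h x)
        (((continuous_pow 2).mul continuous_φ).sub continuous_φ |>.intervalIntegrable a b)
    have hsub := integral_sub (integrable_z2φ.integrableOn (s := Ioc a b))
      (integrable_φ.integrableOn (s := Ioc a b))
    rw [hkey] at hsub
    have : (∫ z in Ioc a b, z ^ 2 * φ z) - M = -b * φ b - (-a * φ a) := by
      rw [hM]; linarith [hsub]
    linarith [this]
  have hp2 : (∫ z in Ioc a b, z * g θ (α + β * z) * φ z)
      = -α * (φ a - φ b) - β * (M + (a * φ a - b * φ b)) := by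
    rw [setIntegral_congr_fun measurableSet_Ioc
      (g := fun z => -α * (z * φ z) + -β * (z ^ 2 * φ z))
      (fun z hz => by
        rw [g_of_abs_le]
        · ring
        · rw [abs_le]
          have h1 : β * a < β * z := mul_lt_mul_of_pos_left hz.1 hβ
          have h2 : β * z ≤ β * b := mul_le_mul_of_nonneg_left hz.2 hβ.le
          rw [hβa] at h1; rw [hβb] at h2
          constructor <;> linarith)]
    rw [integral_add ((integrable_zφ.integrableOn).const_mul (-α))
      ((integrable_z2φ.integrableOn).const_mul (-β)),
      integral_const_mul, integral_const_mul, hmid1, hmid2]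
    ring
  rw [← hsplit1, ← hsplit2, hp1, hp2, hp3]
  linear_combination (-(φ a)) * hβa + (φ b) * hβb

lemma stein (α β θ : ℝ) (hθ : 0 < θ) :
    ∫ z, z * g θ (α + β * z) ∂gμ = -β * (gμ {z | |α + β * z| < θ}).toReal := by
  rcases lt_trichotomy β 0 with hβ | hβ | hβ
  · -- use symmetry z ↦ -z
    have hmap : Measure.map (fun z : ℝ => -z) gμ = gμ := by
      have h := gaussianReal_map_const_mul (μ := 0) (v := 1) (-1)
      simp only [neg_one_mul] at h
      rw [gμ]
      convert h using 2
      · norm_num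
      · ext; norm_num
    have hβ' : 0 < -β := by linarith
    have hmeas : Measurable (fun z : ℝ => z * g θ (α + β * z)) :=
      measurable_id.mul ((measurable_g hθ.le).comp (by fun_prop))
    have key : ∫ z, z * g θ (α + β * z) ∂gμ = ∫ z, -(z * g θ (α + -β * z)) ∂gμ := by
      conv_lhs => rw [← hmap]
      rw [integral_map measurable_neg.aemeasurable
        (by rw [hmap]; exact hmeas.aestronglyMeasurable)]
      congr 1
      funext z
      have harg : α + β * -z = α + -β * z := by ring
      simp only [harg]
      ring
    rw [key, integral_neg, stein_pos hβ' hθ]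
    have hsets : gμ {z | |α + -β * z| < θ} = gμ {z | |α + β * z| < θ} := by
      have hms : MeasurableSet {z : ℝ | |α + β * z| < θ} :=
        measurableSet_lt (by fun_prop) measurable_const
      conv_rhs => rw [← hmap]
      rw [Measure.map_apply measurable_neg hms]
      congr 1
      ext z
      simp only [mem_preimage, mem_setOf_eq]
      have : α + β * -z = α + -β * z := by ring
      rw [this]
    rw [hsets]
    ring
  · subst hβ
    simp only [zero_mul, add_zero, neg_zero]
    rw [show (fun z : ℝ => z * g θ α) = fun z => g θ α * z from funext fun z => mul_comm _ _,
      integral_const_mul, integral_id_gauss, mul_zero]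
  · exact stein_pos hβ hθ

lemma compl_toReal {α : Type*} [MeasurableSpace α] (P : Measure α) [IsProbabilityMeasure P]
    {S : Set α} (hS : MeasurableSet S) : (P Sᶜ).toReal = 1 - (P S).toReal := by
  have h1 : (P S).toReal + (P Sᶜ).toReal = 1 := by
    rw [← ENNReal.toReal_add (measure_ne_top _ _) (measure_ne_top _ _),
      measure_add_measure_compl hS, measure_univ, ENNReal.toReal_one]
  linarith

lemma integral_fst (f : ℝ → ℝ) :
    ∫ p : ℝ × ℝ, f p.1 ∂(gμ.prod gμ) = ∫ z, f z ∂gμ := by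
  have h := integral_prod_mul (μ := gμ) (ν := gμ) f (fun _ => (1:ℝ))
  simpa using h

lemma key (m ζ₁ ζ₂ ρ sq θ₁ θ₂ : ℝ) (hθ₁ : 0 < θ₁) (hθ₂ : 0 < θ₂) :
    ∫ p : ℝ × ℝ, (softThresh (m + ζ₁ * p.1) θ₁ - m)
        * (softThresh (m + ζ₂ * (ρ * p.1 + sq * p.2)) θ₂ - m) ∂(gμ.prod gμ)
      = -(ρ * ζ₁ * ζ₂)
        + (∫ p : ℝ × ℝ, g θ₁ (m + ζ₁ * p.1)
            * g θ₂ (m + ζ₂ * (ρ * p.1 + sq * p.2)) ∂(gμ.prod gμ))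
        + (ρ * ζ₁ * ζ₂) * (((gμ.prod gμ) {p : ℝ × ℝ | θ₁ ≤ |m + ζ₁ * p.1|}).toReal
            + ((gμ.prod gμ) {p : ℝ × ℝ | θ₂ ≤ |m + ζ₂ * (ρ * p.1 + sq * p.2)|}).toReal) := by
  set ν : Measure (ℝ × ℝ) := gμ.prod gμ with hν
  have hF₁ : Measurable (fun p : ℝ × ℝ => m + ζ₁ * p.1) := by fun_prop
  have hF₂ : Measurable (fun p : ℝ × ℝ => m + ζ₂ * (ρ * p.1 + sq * p.2)) := by fun_prop
  have hg₁ : Measurable (fun p : ℝ × ℝ => g θ₁ (m + ζ₁ * p.1)) :=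
    (measurable_g hθ₁.le).comp hF₁
  have hg₂ : Measurable (fun p : ℝ × ℝ => g θ₂ (m + ζ₂ * (ρ * p.1 + sq * p.2))) :=
    (measurable_g hθ₂.le).comp hF₂
  -- integrabilities
  have hi_fst : Integrable (fun p : ℝ × ℝ => p.1) ν := by
    simpa using Integrable.mul_prod integrable_id_gauss (integrable_const (1:ℝ))
  have hi_snd : Integrable (fun p : ℝ × ℝ => p.2) ν := by
    simpa using Integrable.mul_prod (integrable_const (1:ℝ)) integrable_id_gauss
  have hi_sqfst : Integrable (fun p : ℝ × ℝ => p.1 ^ 2) ν := by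
    simpa using Integrable.mul_prod integrable_sq_gauss (integrable_const (1:ℝ))
  have hi_mul : Integrable (fun p : ℝ × ℝ => p.1 * p.2) ν :=
    Integrable.mul_prod integrable_id_gauss integrable_id_gauss
  have hiA : Integrable (fun p : ℝ × ℝ =>
      g θ₁ (m + ζ₁ * p.1) * g θ₂ (m + ζ₂ * (ρ * p.1 + sq * p.2))) ν := by
    refine integrable_of_bounded ν (hg₁.mul hg₂).aestronglyMeasurable (θ₁ * θ₂) fun p => ?_
    rw [abs_mul]
    exact mul_le_mul (abs_g_le hθ₁.le _) (abs_g_le hθ₂.le _) (abs_nonneg _) hθ₁.le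
  have hiB₁ : Integrable (fun p : ℝ × ℝ => p.1 * g θ₁ (m + ζ₁ * p.1)) ν := by
    refine Integrable.mono' ((hi_fst.abs).const_mul θ₁)
      (measurable_fst.mul hg₁).aestronglyMeasurable (ae_of_all _ fun p => ?_)
    simp only [Real.norm_eq_abs, abs_mul]
    calc |p.1| * |g θ₁ (m + ζ₁ * p.1)| ≤ |p.1| * θ₁ :=
          mul_le_mul_of_nonneg_left (abs_g_le hθ₁.le _) (abs_nonneg _)
      _ = θ₁ * |p.1| := mul_comm _ _
  have hiB₂ : Integrable (fun p : ℝ × ℝ => g θ₁ (m + ζ₁ * p.1) * p.2) ν := by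
    refine Integrable.mono' ((hi_snd.abs).const_mul θ₁)
      (hg₁.mul measurable_snd).aestronglyMeasurable (ae_of_all _ fun p => ?_)
    simp only [Real.norm_eq_abs, abs_mul]
    exact mul_le_mul_of_nonneg_right (abs_g_le hθ₁.le _) (abs_nonneg _)
  have hiC : Integrable (fun p : ℝ × ℝ => p.1 * g θ₂ (m + ζ₂ * (ρ * p.1 + sq * p.2))) ν := by
    refine Integrable.mono' ((hi_fst.abs).const_mul θ₂)
      (measurable_fst.mul hg₂).aestronglyMeasurable (ae_of_all _ fun p => ?_)
    simp only [Real.norm_eq_abs, abs_mul]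
    calc |p.1| * |g θ₂ (m + ζ₂ * (ρ * p.1 + sq * p.2))| ≤ |p.1| * θ₂ :=
          mul_le_mul_of_nonneg_left (abs_g_le hθ₂.le _) (abs_nonneg _)
      _ = θ₂ * |p.1| := mul_comm _ _
  -- pointwise expansion
  have heq : (fun p : ℝ × ℝ => (softThresh (m + ζ₁ * p.1) θ₁ - m)
        * (softThresh (m + ζ₂ * (ρ * p.1 + sq * p.2)) θ₂ - m))
      = fun p : ℝ × ℝ =>
        (g θ₁ (m + ζ₁ * p.1) * g θ₂ (m + ζ₂ * (ρ * p.1 + sq * p.2))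
          + ((ζ₂ * ρ) * (p.1 * g θ₁ (m + ζ₁ * p.1))
              + (ζ₂ * sq) * (g θ₁ (m + ζ₁ * p.1) * p.2)))
        + ζ₁ * (p.1 * g θ₂ (m + ζ₂ * (ρ * p.1 + sq * p.2)))
        + ((ζ₁ * ζ₂ * ρ) * p.1 ^ 2 + (ζ₁ * ζ₂ * sq) * (p.1 * p.2)) := by
    funext p
    simp only [g]
    ring
  rw [heq]
  have hiB : Integrable (fun p : ℝ × ℝ => (ζ₂ * ρ) * (p.1 * g θ₁ (m + ζ₁ * p.1))
      + (ζ₂ * sq) * (g θ₁ (m + ζ₁ * p.1) * p.2)) ν :=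
    (hiB₁.const_mul _).add (hiB₂.const_mul _)
  have hiD : Integrable (fun p : ℝ × ℝ => (ζ₁ * ζ₂ * ρ) * p.1 ^ 2
      + (ζ₁ * ζ₂ * sq) * (p.1 * p.2)) ν :=
    (hi_sqfst.const_mul _).add (hi_mul.const_mul _)
  have s1 : ∫ p : ℝ × ℝ, (g θ₁ (m + ζ₁ * p.1) * g θ₂ (m + ζ₂ * (ρ * p.1 + sq * p.2)) + ((ζ₂ * ρ) * (p.1 * g θ₁ (m + ζ₁ * p.1)) + (ζ₂ * sq) * (g θ₁ (m + ζ₁ * p.1) * p.2)) + ζ₁ * (p.1 * g θ₂ (m + ζ₂ * (ρ * p.1 + sq * p.2))) + ((ζ₁ * ζ₂ * ρ) * p.1 ^ 2 + (ζ₁ * ζ₂ * sq) * (p.1 * p.2))) ∂ν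
      = (∫ p : ℝ × ℝ, (g θ₁ (m + ζ₁ * p.1) * g θ₂ (m + ζ₂ * (ρ * p.1 + sq * p.2)) + ((ζ₂ * ρ) * (p.1 * g θ₁ (m + ζ₁ * p.1)) + (ζ₂ * sq) * (g θ₁ (m + ζ₁ * p.1) * p.2)) + ζ₁ * (p.1 * g θ₂ (m + ζ₂ * (ρ * p.1 + sq * p.2)))) ∂ν) + ∫ p : ℝ × ℝ, ((ζ₁ * ζ₂ * ρ) * p.1 ^ 2 + (ζ₁ * ζ₂ * sq) * (p.1 * p.2)) ∂ν :=
    integral_add ((hiA.add hiB).add (hiC.const_mul ζ₁)) hiD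
  have s2 : ∫ p : ℝ × ℝ, (g θ₁ (m + ζ₁ * p.1) * g θ₂ (m + ζ₂ * (ρ * p.1 + sq * p.2)) + ((ζ₂ * ρ) * (p.1 * g θ₁ (m + ζ₁ * p.1)) + (ζ₂ * sq) * (g θ₁ (m + ζ₁ * p.1) * p.2)) + ζ₁ * (p.1 * g θ₂ (m + ζ₂ * (ρ * p.1 + sq * p.2)))) ∂ν
      = (∫ p : ℝ × ℝ, (g θ₁ (m + ζ₁ * p.1) * g θ₂ (m + ζ₂ * (ρ * p.1 + sq * p.2)) + ((ζ₂ * ρ) * (p.1 * g θ₁ (m + ζ₁ * p.1)) + (ζ₂ * sq) * (g θ₁ (m + ζ₁ * p.1) * p.2))) ∂ν) + ∫ p : ℝ × ℝ, ζ₁ * (p.1 * g θ₂ (m + ζ₂ * (ρ * p.1 + sq * p.2))) ∂ν :=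
    integral_add (hiA.add hiB) (hiC.const_mul ζ₁)
  have s3 : ∫ p : ℝ × ℝ, (g θ₁ (m + ζ₁ * p.1) * g θ₂ (m + ζ₂ * (ρ * p.1 + sq * p.2)) + ((ζ₂ * ρ) * (p.1 * g θ₁ (m + ζ₁ * p.1)) + (ζ₂ * sq) * (g θ₁ (m + ζ₁ * p.1) * p.2))) ∂ν
      = (∫ p : ℝ × ℝ, g θ₁ (m + ζ₁ * p.1) * g θ₂ (m + ζ₂ * (ρ * p.1 + sq * p.2)) ∂ν) + ∫ p : ℝ × ℝ, ((ζ₂ * ρ) * (p.1 * g θ₁ (m + ζ₁ * p.1)) + (ζ₂ * sq) * (g θ₁ (m + ζ₁ * p.1) * p.2)) ∂ν :=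
    integral_add hiA hiB
  have s4 : ∫ p : ℝ × ℝ, ((ζ₂ * ρ) * (p.1 * g θ₁ (m + ζ₁ * p.1)) + (ζ₂ * sq) * (g θ₁ (m + ζ₁ * p.1) * p.2)) ∂ν
      = (∫ p : ℝ × ℝ, (ζ₂ * ρ) * (p.1 * g θ₁ (m + ζ₁ * p.1)) ∂ν) + ∫ p : ℝ × ℝ, (ζ₂ * sq) * (g θ₁ (m + ζ₁ * p.1) * p.2) ∂ν :=
    integral_add (hiB₁.const_mul _) (hiB₂.const_mul _)
  have s5 : ∫ p : ℝ × ℝ, ((ζ₁ * ζ₂ * ρ) * p.1 ^ 2 + (ζ₁ * ζ₂ * sq) * (p.1 * p.2)) ∂ν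
      = (∫ p : ℝ × ℝ, (ζ₁ * ζ₂ * ρ) * p.1 ^ 2 ∂ν) + ∫ p : ℝ × ℝ, (ζ₁ * ζ₂ * sq) * (p.1 * p.2) ∂ν :=
    integral_add (hi_sqfst.const_mul _) (hi_mul.const_mul _)
  have m1 : ∫ p : ℝ × ℝ, (ζ₂ * ρ) * (p.1 * g θ₁ (m + ζ₁ * p.1)) ∂ν = (ζ₂ * ρ) * ∫ p : ℝ × ℝ, p.1 * g θ₁ (m + ζ₁ * p.1) ∂ν :=
    integral_const_mul _ _
  have m2 : ∫ p : ℝ × ℝ, (ζ₂ * sq) * (g θ₁ (m + ζ₁ * p.1) * p.2) ∂ν = (ζ₂ * sq) * ∫ p : ℝ × ℝ, g θ₁ (m + ζ₁ * p.1) * p.2 ∂ν :=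
    integral_const_mul _ _
  have m3 : ∫ p : ℝ × ℝ, ζ₁ * (p.1 * g θ₂ (m + ζ₂ * (ρ * p.1 + sq * p.2))) ∂ν = ζ₁ * ∫ p : ℝ × ℝ, p.1 * g θ₂ (m + ζ₂ * (ρ * p.1 + sq * p.2)) ∂ν :=
    integral_const_mul _ _
  have m4 : ∫ p : ℝ × ℝ, (ζ₁ * ζ₂ * ρ) * p.1 ^ 2 ∂ν = (ζ₁ * ζ₂ * ρ) * ∫ p : ℝ × ℝ, p.1 ^ 2 ∂ν :=
    integral_const_mul _ _
  have m5 : ∫ p : ℝ × ℝ, (ζ₁ * ζ₂ * sq) * (p.1 * p.2) ∂ν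
      = (ζ₁ * ζ₂ * sq) * ∫ p : ℝ × ℝ, p.1 * p.2 ∂ν :=
    integral_const_mul _ _
  rw [s1, s2, s3, s4, s5, m1, m2, m3, m4, m5]
  -- term D
  have hD1 : ∫ p : ℝ × ℝ, p.1 ^ 2 ∂ν = 1 := by
    rw [hν, integral_fst (fun z => z ^ 2)]
    exact integral_sq_gauss
  have hD2 : ∫ p : ℝ × ℝ, p.1 * p.2 ∂ν = 0 := by
    rw [hν, integral_prod_mul (fun z : ℝ => z) (fun z : ℝ => z), integral_id_gauss, zero_mul]
  -- term B2
  have hB2 : ∫ p : ℝ × ℝ, g θ₁ (m + ζ₁ * p.1) * p.2 ∂ν = 0 := by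
    rw [hν, integral_prod_mul (fun z : ℝ => g θ₁ (m + ζ₁ * z)) (fun z : ℝ => z),
      integral_id_gauss, mul_zero]
  -- term B1 via stein
  have hB1 : ∫ p : ℝ × ℝ, p.1 * g θ₁ (m + ζ₁ * p.1) ∂ν
      = -ζ₁ * (gμ {z : ℝ | |m + ζ₁ * z| < θ₁}).toReal := by
    rw [hν]
    have h := integral_fst (fun z => z * g θ₁ (m + ζ₁ * z))
    rw [h]
    exact stein m ζ₁ θ₁ hθ₁
  -- fst set measure
  have hms₁ : MeasurableSet {z : ℝ | |m + ζ₁ * z| < θ₁} :=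
    measurableSet_lt (by fun_prop) measurable_const
  have hq₁ : ν {p : ℝ × ℝ | |m + ζ₁ * p.1| < θ₁} = gμ {z : ℝ | |m + ζ₁ * z| < θ₁} := by
    have hset : {p : ℝ × ℝ | |m + ζ₁ * p.1| < θ₁}
        = {z : ℝ | |m + ζ₁ * z| < θ₁} ×ˢ (univ : Set ℝ) := by
      ext p; simp [Set.mem_prod]
    rw [hν, hset, Measure.prod_prod, measure_univ, mul_one]
  -- term C via Fubini and stein
  set T : Set (ℝ × ℝ) := {p : ℝ × ℝ | |m + ζ₂ * (ρ * p.1 + sq * p.2)| < θ₂} with hT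
  have hTm : MeasurableSet T :=
    measurableSet_lt (by fun_prop) measurable_const
  have hC : ∫ p : ℝ × ℝ, p.1 * g θ₂ (m + ζ₂ * (ρ * p.1 + sq * p.2)) ∂ν
      = -(ζ₂ * ρ) * (ν T).toReal := by
    rw [hν, integral_prod_symm _ (by rw [← hν]; exact hiC)]
    have hinner : ∀ y : ℝ, (∫ x, x * g θ₂ (m + ζ₂ * (ρ * x + sq * y)) ∂gμ)
        = -(ζ₂ * ρ) * (gμ ((fun x => (x, y)) ⁻¹' T)).toReal := by
      intro y
      have harg : (fun x : ℝ => x * g θ₂ (m + ζ₂ * (ρ * x + sq * y)))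
          = fun x : ℝ => x * g θ₂ ((m + ζ₂ * sq * y) + (ζ₂ * ρ) * x) := by
        funext x; congr 2; ring
      rw [harg, stein (m + ζ₂ * sq * y) (ζ₂ * ρ) θ₂ hθ₂]
      have hSeq : {z : ℝ | |m + ζ₂ * sq * y + ζ₂ * ρ * z| < θ₂} = (fun x : ℝ => (x, y)) ⁻¹' T := by
        ext x
        simp only [mem_setOf_eq, mem_preimage, hT]
        rw [show m + ζ₂ * sq * y + ζ₂ * ρ * x = m + ζ₂ * (ρ * x + sq * y) from by ring]
      rw [hSeq]
    rw [integral_congr_ae (ae_of_all _ hinner), integral_const_mul]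
    congr 1
    rw [integral_toReal ((measurable_measure_prodMk_right hTm).aemeasurable)
      (ae_of_all _ fun y => measure_lt_top _ _)]
    rw [Measure.prod_apply_symm hTm]
  -- complements
  have hcompl₁ : (ν {p : ℝ × ℝ | θ₁ ≤ |m + ζ₁ * p.1|}).toReal
      = 1 - (gμ {z : ℝ | |m + ζ₁ * z| < θ₁}).toReal := by
    have hs : {p : ℝ × ℝ | θ₁ ≤ |m + ζ₁ * p.1|} = {p : ℝ × ℝ | |m + ζ₁ * p.1| < θ₁}ᶜ := by
      ext p; simp [not_lt]
    rw [hs, compl_toReal ν (measurableSet_lt (by fun_prop) measurable_const), hq₁]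
  have hcompl₂ : (ν {p : ℝ × ℝ | θ₂ ≤ |m + ζ₂ * (ρ * p.1 + sq * p.2)|}).toReal
      = 1 - (ν T).toReal := by
    have hs : {p : ℝ × ℝ | θ₂ ≤ |m + ζ₂ * (ρ * p.1 + sq * p.2)|} = Tᶜ := by
      ext p; simp [hT, not_lt]
    rw [hs, compl_toReal ν hTm]
  rw [hD1, hD2, hB1, hB2, hC, hcompl₁, hcompl₂]
  ring

end SteinAux


theorem soft_threshold_covariance_identity
    {Ω : Type*} [MeasureSpace Ω] [IsProbabilityMeasure (volume : Measure Ω)]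
    (Z₁ Z₂ : Ω → ℝ) (hZ₁m : Measurable Z₁) (hZ₂m : Measurable Z₂)
    (hZ₁ : Measure.map Z₁ volume = gaussianReal 0 1)
    (hZ₂ : Measure.map Z₂ volume = gaussianReal 0 1)
    (hindep : IndepFun Z₁ Z₂ volume)
    (m ζ₁ ζ₂ ρ : ℝ) (hζ₁ : 0 < ζ₁) (hζ₂ : 0 < ζ₂) (hρ₁ : -1 ≤ ρ) (hρ₂ : ρ ≤ 1)
    (X₁ X₂ : Ω → ℝ)
    (hX₁ : ∀ ω, X₁ ω = m + ζ₁ * Z₁ ω)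
    (hX₂ : ∀ ω, X₂ ω = m + ζ₂ * (ρ * Z₁ ω + Real.sqrt (1 - ρ ^ 2) * Z₂ ω))
    (c : ℝ) (hc : c = ρ * ζ₁ * ζ₂)
    (θ₁ θ₂ : ℝ) (hθ₁ : 0 < θ₁) (hθ₂ : 0 < θ₂) :
    ∫ ω, (softThresh (X₁ ω) θ₁ - m) * (softThresh (X₂ ω) θ₂ - m)
      = -c + (∫ ω, (softThresh (X₁ ω) θ₁ - X₁ ω) * (softThresh (X₂ ω) θ₂ - X₂ ω))
        + c * ((volume {ω | θ₁ ≤ |X₁ ω|}).toReal + (volume {ω | θ₂ ≤ |X₂ ω|}).toReal) := by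

  set sq : ℝ := Real.sqrt (1 - ρ ^ 2) with hsq
  have hpm : Measurable fun ω => (Z₁ ω, Z₂ ω) := hZ₁m.prodMk hZ₂m
  have hmap : Measure.map (fun ω => (Z₁ ω, Z₂ ω)) volume = SteinAux.gμ.prod SteinAux.gμ := by
    have h := (indepFun_iff_map_prod_eq_prod_map_map hZ₁m.aemeasurable hZ₂m.aemeasurable).mp hindep
    rw [hZ₁, hZ₂] at h
    exact h
  have htrans : ∀ H : ℝ × ℝ → ℝ, Measurable H →
      (∫ ω, H (Z₁ ω, Z₂ ω)) = ∫ p, H p ∂(SteinAux.gμ.prod SteinAux.gμ) := by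
    intro H hH
    rw [← hmap, integral_map hpm.aemeasurable hH.aestronglyMeasurable]
  have hc₁ : Continuous fun p : ℝ × ℝ => softThresh (m + ζ₁ * p.1) θ₁ :=
    (SteinAux.continuous_softThresh hθ₁.le).comp (by fun_prop)
  have hc₂ : Continuous fun p : ℝ × ℝ => softThresh (m + ζ₂ * (ρ * p.1 + sq * p.2)) θ₂ :=
    (SteinAux.continuous_softThresh hθ₂.le).comp (by fun_prop)
  have hL : (∫ ω, (softThresh (X₁ ω) θ₁ - m) * (softThresh (X₂ ω) θ₂ - m))
      = ∫ p : ℝ × ℝ, (softThresh (m + ζ₁ * p.1) θ₁ - m)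
          * (softThresh (m + ζ₂ * (ρ * p.1 + sq * p.2)) θ₂ - m)
          ∂(SteinAux.gμ.prod SteinAux.gμ) := by
    simp only [hX₁, hX₂]
    exact htrans (fun p => (softThresh (m + ζ₁ * p.1) θ₁ - m)
      * (softThresh (m + ζ₂ * (ρ * p.1 + sq * p.2)) θ₂ - m))
      (((hc₁.sub continuous_const).mul (hc₂.sub continuous_const)).measurable)
  have hA : (∫ ω, (softThresh (X₁ ω) θ₁ - X₁ ω) * (softThresh (X₂ ω) θ₂ - X₂ ω))
      = ∫ p : ℝ × ℝ, SteinAux.g θ₁ (m + ζ₁ * p.1)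
          * SteinAux.g θ₂ (m + ζ₂ * (ρ * p.1 + sq * p.2)) ∂(SteinAux.gμ.prod SteinAux.gμ) := by
    simp only [hX₁, hX₂]
    exact htrans (fun p => SteinAux.g θ₁ (m + ζ₁ * p.1)
      * SteinAux.g θ₂ (m + ζ₂ * (ρ * p.1 + sq * p.2)))
      (((SteinAux.measurable_g hθ₁.le).comp (by fun_prop)).mul
        ((SteinAux.measurable_g hθ₂.le).comp (by fun_prop)))
  have hS₁ : volume {ω | θ₁ ≤ |X₁ ω|}
      = (SteinAux.gμ.prod SteinAux.gμ) {p : ℝ × ℝ | θ₁ ≤ |m + ζ₁ * p.1|} := by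
    have hms : MeasurableSet {p : ℝ × ℝ | θ₁ ≤ |m + ζ₁ * p.1|} :=
      measurableSet_le measurable_const (by fun_prop)
    have hset : {ω | θ₁ ≤ |X₁ ω|}
        = (fun ω => (Z₁ ω, Z₂ ω)) ⁻¹' {p : ℝ × ℝ | θ₁ ≤ |m + ζ₁ * p.1|} := by
      ext ω; simp [hX₁]
    rw [hset, ← Measure.map_apply hpm hms, hmap]
  have hS₂ : volume {ω | θ₂ ≤ |X₂ ω|}
      = (SteinAux.gμ.prod SteinAux.gμ)
          {p : ℝ × ℝ | θ₂ ≤ |m + ζ₂ * (ρ * p.1 + sq * p.2)|} := by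
    have hms : MeasurableSet {p : ℝ × ℝ | θ₂ ≤ |m + ζ₂ * (ρ * p.1 + sq * p.2)|} :=
      measurableSet_le measurable_const (by fun_prop)
    have hset : {ω | θ₂ ≤ |X₂ ω|}
        = (fun ω => (Z₁ ω, Z₂ ω)) ⁻¹' {p : ℝ × ℝ | θ₂ ≤ |m + ζ₂ * (ρ * p.1 + sq * p.2)|} := by
      ext ω; simp [hX₂]
    rw [hset, ← Measure.map_apply hpm hms, hmap]
  rw [hL, hA, hS₁, hS₂, hc]
  exact SteinAux.key m ζ₁ ζ₂ ρ sq θ₁ θ₂ hθ₁ hθ₂
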